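/- For any ordering of the three pairs {i,j}, {j,k}, {k,i} (i, j, k distinct) as a subsequence of an RCMSN, the first pair in the ordering can reach the sensor it does not contain, and the second pair can reach the sensor it does not contain; hence every 3-element subset of sensors contributes at least 2 deliveries beyond the trivial ones. -/
import Mathlib

/-- Packet `a k` can reach sensor `x`. -/
def canReach {n m : ℕ} (a : Fin m → Finset (Fin n)) (k : Fin m) (x : Fin n) : Prop :=
  ∃ k' : Fin m,
    Relation.ReflTransGen (fun i j : Fin m => i < j ∧ (a i ∩ a j).Nonempty) k k' ∧ x ∈ a k'

lemma triple_inter {n : ℕ} (i j k : Fin n) (S T : Finset (Fin n))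
    (hS : S ∈ ({({i, j} : Finset (Fin n)), {j, k}, {k, i}} : Set (Finset (Fin n))))
    (hT : T ∈ ({({i, j} : Finset (Fin n)), {j, k}, {k, i}} : Set (Finset (Fin n)))) :
    (S ∩ T).Nonempty := by
  simp only [Set.mem_insert_iff, Set.mem_singleton_iff] at hS hT
  rcases hS with h|h|h <;> rcases hT with h'|h'|h' <;> subst h <;> subst h' <;>
    first
      | (refine ⟨i, ?_⟩; simp; done)
      | (refine ⟨j, ?_⟩; simp; done)
      | (refine ⟨k, ?_⟩; simp; done)

lemma triple_mem_other {n : ℕ} (i j k : Fin n) (hij : i ≠ j) (hjk : j ≠ k) (hik : i ≠ k)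
    (S T : Finset (Fin n))
    (hS : S ∈ ({({i, j} : Finset (Fin n)), {j, k}, {k, i}} : Set (Finset (Fin n))))
    (hT : T ∈ ({({i, j} : Finset (Fin n)), {j, k}, {k, i}} : Set (Finset (Fin n))))
    (hST : S ≠ T) (x : Fin n) (hx : x ∈ ({i, j, k} : Finset (Fin n))) (hxS : x ∉ S) :
    x ∈ T := by
  simp only [Set.mem_insert_iff, Set.mem_singleton_iff] at hS hT
  simp only [Finset.mem_insert, Finset.mem_singleton] at hx ⊢
  rcases hS with h|h|h <;> rcases hT with h'|h'|h' <;> subst h <;> subst h' <;>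
    simp_all <;> tauto

theorem stmt_2 (n m : ℕ) (a : Fin m → Finset (Fin n))
    (i j k : Fin n) (hij : i ≠ j) (hjk : j ≠ k) (hik : i ≠ k)
    (p q r : Fin m) (hpq : p < q) (hqr : q < r)
    (hset : ({a p, a q, a r} : Set (Finset (Fin n))) =
      {({i, j} : Finset (Fin n)), {j, k}, {k, i}}) :
    (∀ x ∈ ({i, j, k} : Finset (Fin n)), x ∉ a p → canReach a p x) ∧
    (∀ x ∈ ({i, j, k} : Finset (Fin n)), x ∉ a q → canReach a q x) := by
  have hP12 : ({i, j} : Finset (Fin n)) ≠ {j, k} := by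
    intro h
    have : i ∈ ({j, k} : Finset (Fin n)) := h ▸ (by simp)
    simp only [Finset.mem_insert, Finset.mem_singleton] at this; tauto
  have hP13 : ({i, j} : Finset (Fin n)) ≠ {k, i} := by
    intro h
    have : j ∈ ({k, i} : Finset (Fin n)) := h ▸ (by simp)
    simp only [Finset.mem_insert, Finset.mem_singleton] at this
    rcases this with h'|h' <;> [exact hjk h'; exact hij h'.symm]
  have hP23 : ({j, k} : Finset (Fin n)) ≠ {k, i} := by
    intro h
    have : j ∈ ({k, i} : Finset (Fin n)) := h ▸ (by simp)
    simp only [Finset.mem_insert, Finset.mem_singleton] at this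
    rcases this with h'|h' <;> [exact hjk h'; exact hij h'.symm]
  have hp : a p ∈ ({({i, j} : Finset (Fin n)), {j, k}, {k, i}} : Set (Finset (Fin n))) := by
    rw [← hset]; simp
  have hq : a q ∈ ({({i, j} : Finset (Fin n)), {j, k}, {k, i}} : Set (Finset (Fin n))) := by
    rw [← hset]; simp
  have hr : a r ∈ ({({i, j} : Finset (Fin n)), {j, k}, {k, i}} : Set (Finset (Fin n))) := by
    rw [← hset]; simp
  have m1 : ({i, j} : Finset (Fin n)) = a p ∨ ({i, j} : Finset (Fin n)) = a q ∨
      ({i, j} : Finset (Fin n)) = a r := by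
    have : ({i, j} : Finset (Fin n)) ∈ ({a p, a q, a r} : Set (Finset (Fin n))) := by
      rw [hset]; simp
    simpa using this
  have m2 : ({j, k} : Finset (Fin n)) = a p ∨ ({j, k} : Finset (Fin n)) = a q ∨
      ({j, k} : Finset (Fin n)) = a r := by
    have : ({j, k} : Finset (Fin n)) ∈ ({a p, a q, a r} : Set (Finset (Fin n))) := by
      rw [hset]; simp
    simpa using this
  have m3 : ({k, i} : Finset (Fin n)) = a p ∨ ({k, i} : Finset (Fin n)) = a q ∨
      ({k, i} : Finset (Fin n)) = a r := by
    have : ({k, i} : Finset (Fin n)) ∈ ({a p, a q, a r} : Set (Finset (Fin n))) := by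
      rw [hset]; simp
    simpa using this
  have hne : a p ≠ a q ∧ a q ≠ a r := by
    constructor <;> intro h <;>
      rcases m1 with e1|e1|e1 <;> rcases m2 with e2|e2|e2 <;> rcases m3 with e3|e3|e3 <;>
      first
        | exact hP12 (e1.trans e2.symm)
        | exact hP13 (e1.trans e3.symm)
        | exact hP23 (e2.trans e3.symm)
        | exact hP12 ((e1.trans h).trans e2.symm)
        | exact hP12 ((e1.trans h.symm).trans e2.symm)
        | exact hP13 ((e1.trans h).trans e3.symm)
        | exact hP13 ((e1.trans h.symm).trans e3.symm)
        | exact hP23 ((e2.trans h).trans e3.symm)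
        | exact hP23 ((e2.trans h.symm).trans e3.symm)
  constructor
  · intro x hx hxp
    exact ⟨q, Relation.ReflTransGen.single ⟨hpq, triple_inter i j k _ _ hp hq⟩,
      triple_mem_other i j k hij hjk hik _ _ hp hq hne.1 x hx hxp⟩
  · intro x hx hxq
    exact ⟨r, Relation.ReflTransGen.single ⟨hqr, triple_inter i j k _ _ hq hr⟩,
      triple_mem_other i j k hij hjk hik _ _ hq hr hne.2 x hx hxq⟩
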